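/- (Dual certificate of measurement optimality.) Let ρ_1, …, ρ_N be positive semidefinite n × n complex matrices, let p_1, …, p_N be nonnegative reals, let (E_i)_{i=1}^N be a POVM, and let K be a Hermitian matrix such that K - p_i ρ_i is positive semidefinite for every i and Re(tr K) = Σ_{i=1}^N p_i Re(tr(ρ_i E_i)). Then for every POVM (F_i)_{i=1}^N one has Σ_{i=1}^N p_i Re(tr(ρ_i F_i)) ≤ Σ_{i=1}^N p_i Re(tr(ρ_i E_i)). -/

import Mathlib

open Matrix
open scoped ComplexOrder

lemma trace_re_nonneg_of_psd {n : ℕ} {A : Matrix (Fin n) (Fin n) ℂ}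
    (hA : A.PosSemidef) : 0 ≤ (A.trace).re := by
  have h : ∀ i, 0 ≤ A i i := fun i => hA.diag_nonneg
  have : (0 : ℂ) ≤ A.trace := Finset.sum_nonneg fun i _ => h i
  exact (Complex.le_def.mp this).1

open scoped MatrixOrder in
lemma trace_mul_psd_re_nonneg {n : ℕ} {A B : Matrix (Fin n) (Fin n) ℂ}
    (hA : A.PosSemidef) (hB : B.PosSemidef) : 0 ≤ ((A * B).trace).re := by
  have hs : CFC.sqrt A * CFC.sqrt A = A := CFC.sqrt_mul_sqrt_self A hA.nonneg
  have hpsd : ((CFC.sqrt A)ᴴ * B * CFC.sqrt A).PosSemidef := hB.conjTranspose_mul_mul_same _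
  rw [(CFC.sqrt_nonneg A).posSemidef.1] at hpsd
  have : (A * B).trace = (CFC.sqrt A * B * CFC.sqrt A).trace := by
    conv_lhs => rw [← hs]
    rw [mul_assoc, trace_mul_comm, mul_assoc]
  rw [this]
  exact trace_re_nonneg_of_psd hpsd

/-- Dual certificate of measurement optimality: if a POVM `E` attains the value of a
dual feasible point `K`, then `E` is optimal among all POVMs. -/
theorem dual_certificate_optimality {n N : ℕ}
    (ρ : Fin N → Matrix (Fin n) (Fin n) ℂ)
    (p : Fin N → ℝ)
    (E : Fin N → Matrix (Fin n) (Fin n) ℂ)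
    (K : Matrix (Fin n) (Fin n) ℂ)
    (hρ : ∀ i, (ρ i).PosSemidef)
    (hp : ∀ i, 0 ≤ p i)
    (hE : ∀ i, (E i).PosSemidef)
    (hEsum : ∑ i, E i = 1)
    (hK : K.IsHermitian)
    (hfeas : ∀ i, (K - (p i : ℂ) • ρ i).PosSemidef)
    (hattain : (K.trace).re = ∑ i, p i * ((ρ i * E i).trace).re) :
    ∀ F : Fin N → Matrix (Fin n) (Fin n) ℂ,
      (∀ i, (F i).PosSemidef) → (∑ i, F i = 1) →
      ∑ i, p i * ((ρ i * F i).trace).re ≤ ∑ i, p i * ((ρ i * E i).trace).re := by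
  intro F hF hFsum
  rw [← hattain]
  have key : ∀ i, p i * ((ρ i * F i).trace).re ≤ ((K * F i).trace).re := by
    intro i
    have h := trace_mul_psd_re_nonneg (hfeas i) (hF i)
    have : ((K - (p i : ℂ) • ρ i) * F i).trace
        = (K * F i).trace - (p i : ℂ) * ((ρ i * F i)).trace := by
      rw [sub_mul, trace_sub, smul_mul_assoc, trace_smul, smul_eq_mul]
    rw [this] at h
    simp only [Complex.sub_re, Complex.mul_re, Complex.ofReal_re, Complex.ofReal_im,
      zero_mul, sub_zero] at h
    linarith
  calc ∑ i, p i * ((ρ i * F i).trace).re ≤ ∑ i, ((K * F i).trace).re :=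
        Finset.sum_le_sum fun i _ => key i
    _ = (K.trace).re := by
        rw [← Complex.re_sum, ← trace_sum]
        congr 2
        rw [← Finset.mul_sum, hFsum, mul_one]
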